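/- Fix a real y > 0.729. Suppose for each even integer k ≥ 12 we are given b_k : ℕ → ℝ satisfying |b_k(n)| ≤ 2 C_k n^{k/2} for all n ≥ 1, where C_k = ((2π)^k/(k−1)!) · e^{28.466} · √((k/12)·log k) · (1.0242382·k/12)^{k/2}. Then ∑_{n=1}^∞ b_k(n) e^{−2πny} tends to 0 as k → ∞ (k even). -/

import Mathlib

open Filter Real

private lemma rpow_mul_exp_le {x s a : ℝ} (hx : 0 < x) (hs : 0 < s) (ha : 0 < a) :
    x ^ s * Real.exp (-(a * x)) ≤ (s / (a * Real.exp 1)) ^ s := by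
  rw [Real.rpow_def_of_pos hx, Real.rpow_def_of_pos (by positivity), ← Real.exp_add]
  apply Real.exp_le_exp.2
  have h := Real.log_le_sub_one_of_pos (show 0 < a * x / s by positivity)
  rw [Real.log_div (by positivity) hs.ne', Real.log_mul ha.ne' hx.ne'] at h
  rw [Real.log_div hs.ne' (by positivity), Real.log_mul ha.ne' (Real.exp_pos 1).ne',
    Real.log_exp]
  have h' : (Real.log a + Real.log x - Real.log s) * s ≤ a * x - s := by
    have h2 := mul_le_mul_of_nonneg_right h hs.le
    have h3 : (a * x / s - 1) * s = a * x - s := by field_simp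
    linarith [h3 ▸ h2]
  ring_nf at h' ⊢
  linarith

private lemma fact_bound {k : ℕ} (hk : 1 ≤ k) :
    (2 * Real.pi) ^ k / (Nat.factorial (k - 1) : ℝ) ≤
      (k : ℝ) * (2 * Real.pi * Real.exp 1 / k) ^ k := by
  have hk0 : (0:ℝ) < k := by exact_mod_cast hk
  have hf : (0:ℝ) < (Nat.factorial (k-1) : ℝ) := by exact_mod_cast (k-1).factorial_pos
  have h1 : (k : ℝ) ^ k ≤ (Nat.factorial k : ℝ) * Real.exp k := by
    have := Real.pow_div_factorial_le_exp (x := (k:ℝ)) hk0.le k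
    rw [div_le_iff₀ (by exact_mod_cast k.factorial_pos)] at this
    linarith
  have h2 : (Nat.factorial k : ℝ) = k * (Nat.factorial (k-1) : ℝ) := by
    exact_mod_cast (Nat.mul_factorial_pred (by omega : k ≠ 0)).symm
  have h3 : Real.exp 1 ^ k = Real.exp k := by
    rw [← Real.exp_nat_mul]; ring_nf
  have key : (2*Real.pi)^k * (k:ℝ)^k ≤
      (k:ℝ) * (2*Real.pi*Real.exp 1)^k * ((Nat.factorial (k-1)):ℝ) := by
    calc (2*Real.pi)^k * (k:ℝ)^k
        ≤ (2*Real.pi)^k * ((Nat.factorial k : ℝ) * Real.exp k) := by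
          have : (0:ℝ) ≤ (2*Real.pi)^k := by positivity
          exact mul_le_mul_of_nonneg_left h1 this
      _ = (k:ℝ) * (2*Real.pi*Real.exp 1)^k * ((Nat.factorial (k-1)):ℝ) := by
          rw [h2, mul_pow (2*Real.pi) (Real.exp 1), h3]; ring
  rw [div_le_iff₀ hf, div_pow,
    show ((k:ℝ) * ((2*Real.pi*Real.exp 1)^k / (k:ℝ)^k)) * ((Nat.factorial (k-1)):ℝ)
      = ((k:ℝ) * (2*Real.pi*Real.exp 1)^k * ((Nat.factorial (k-1)):ℝ)) / (k:ℝ)^k from by ring,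
    le_div_iff₀ (by positivity)]
  exact key

/-- The constant
`C_k = ((2π)^k/(k−1)!) · e^{28.466} · √((k/12)·log k) · (1.0242382·k/12)^{k/2}`. -/
noncomputable def Ck (k : ℕ) : ℝ :=
  ((2 * Real.pi) ^ k / (Nat.factorial (k - 1) : ℝ)) * Real.exp 28.466 *
    Real.sqrt (((k : ℝ) / 12) * Real.log k) *
    (1.0242382 * (k : ℝ) / 12) ^ ((k : ℝ) / 2)

/-- Fix a real `y > 0.729`.  If for each even `k ≥ 12` the coefficients `b_k : ℕ → ℝ`
satisfy `|b_k(n)| ≤ 2 C_k n^{k/2}` for all `n ≥ 1`, then `∑_{n=1}^∞ b_k(n) e^{−2πny} → 0`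
as `k → ∞` over even `k`. -/
theorem cusp_contribution_tendsto_zero (y : ℝ) (hy : 0.729 < y) (b : ℕ → ℕ → ℝ)
    (hb : ∀ k : ℕ, Even k → 12 ≤ k → ∀ n : ℕ, 1 ≤ n →
      |b k n| ≤ 2 * Ck k * (n : ℝ) ^ ((k : ℝ) / 2)) :
    Tendsto (fun k : ℕ => ∑' n : ℕ, b k (n + 1) * Real.exp (-2 * Real.pi * ((n : ℝ) + 1) * y))
      (atTop ⊓ Filter.principal {k : ℕ | Even k}) (nhds 0) := by
  have hpi : (0:ℝ) < Real.pi := Real.pi_pos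
  set δ : ℝ := y - 0.729 with hδdef
  have hδ : 0 < δ := by rw [hδdef]; linarith
  set r : ℝ := Real.exp (-(2*Real.pi*δ)) with hrdef
  have hr0 : 0 < r := Real.exp_pos _
  have hr1 : r < 1 := by
    rw [hrdef, show (1:ℝ) = Real.exp 0 from (Real.exp_zero).symm]
    apply Real.exp_lt_exp.2
    nlinarith
  have hir : 0 < (1 - r)⁻¹ := inv_pos.2 (by linarith)
  set q : ℝ := 1.0242382 * Real.pi * Real.exp 1 / 8.748 with hqdef
  have hq0 : 0 ≤ q := by rw [hqdef]; positivity
  have hq1 : q < 1 := by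
    rw [hqdef, div_lt_one (by norm_num)]
    nlinarith [Real.pi_lt_d6, Real.exp_one_lt_d9, Real.pi_gt_three, Real.exp_one_gt_d9]
  set t : ℝ := Real.sqrt q with htdef
  have ht0 : 0 ≤ t := Real.sqrt_nonneg _
  have ht1 : t < 1 := by
    rw [htdef, show (1:ℝ) = Real.sqrt 1 from Real.sqrt_one.symm]
    exact Real.sqrt_lt_sqrt hq0 hq1
  have ht2 : t^2 = q := Real.sq_sqrt hq0
  set E : ℝ := Real.exp 28.466 with hEdef
  have hE : (0:ℝ) < E := Real.exp_pos _
  set D : ℝ := 2 * (1-r)⁻¹ * E with hDdef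
  have hG : Tendsto (fun k : ℕ => D * ((k:ℝ)^2 * t^k)) atTop (nhds 0) := by
    have hnorm : ‖t‖ < 1 := by rwa [Real.norm_eq_abs, abs_of_nonneg ht0]
    have h := (summable_pow_mul_geometric_of_norm_lt_one 2 hnorm).tendsto_atTop_zero
    have h2 := h.const_mul D
    rw [mul_zero] at h2
    exact h2
  apply squeeze_zero_norm' ?_ (hG.mono_left inf_le_left)
  rw [Filter.eventually_inf_principal]
  filter_upwards [Filter.eventually_ge_atTop 12] with k hk12 hke
  have hke' : Even k := hke
  obtain ⟨m, hm⟩ := hke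
  have hm6 : 6 ≤ m := by omega
  have hk2m : k = 2 * m := by omega
  have hk0 : (0:ℝ) < k := by exact_mod_cast (by omega : 0 < k)
  have hkm : (k:ℝ) = 2*(m:ℝ) := by rw [hk2m]; push_cast; ring
  have hm0 : (0:ℝ) < (m:ℝ) := by exact_mod_cast (by omega : 0 < m)
  have hs : (k:ℝ)/2 = (m:ℝ) := by rw [hkm]; ring
  have hsp : (0:ℝ) < (k:ℝ)/2 := by rw [hs]; exact hm0
  set M : ℝ := ((k:ℝ)/2 / (2*Real.pi*0.729*Real.exp 1)) ^ ((k:ℝ)/2) with hMdef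
  have hM0 : 0 ≤ M := Real.rpow_nonneg (by positivity) _
  have hCk0 : 0 ≤ Ck k := by
    rw [Ck]
    have : (0:ℝ) ≤ (1.0242382 * (k : ℝ) / 12) ^ ((k : ℝ) / 2) :=
      Real.rpow_nonneg (by positivity) _
    have h2 : (0:ℝ) ≤ ((2 * Real.pi) ^ k / (Nat.factorial (k - 1) : ℝ)) := by positivity
    have h3 : (0:ℝ) ≤ Real.sqrt (((k : ℝ) / 12) * Real.log k) := Real.sqrt_nonneg _
    positivity
  -- pointwise bound on terms
  have hterm : ∀ n : ℕ, ‖b k (n+1) * Real.exp (-2*Real.pi*((n:ℝ)+1)*y)‖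
      ≤ (2 * Ck k * M) * r^n := by
    intro n
    rw [Real.norm_eq_abs, abs_mul, Real.abs_exp]
    have hb' := hb k hke' hk12 (n+1) (by omega)
    push_cast at hb'
    have hx : (0:ℝ) < (n:ℝ)+1 := by positivity
    have hdec : Real.exp (-2*Real.pi*((n:ℝ)+1)*y)
        = Real.exp (-(2*Real.pi*0.729*((n:ℝ)+1))) * Real.exp (-(2*Real.pi*δ)*((n:ℝ)+1)) := by
      rw [← Real.exp_add]; congr 1; rw [hδdef]; ring
    have hkey := rpow_mul_exp_le (x := (n:ℝ)+1) (s := (k:ℝ)/2) (a := 2*Real.pi*0.729)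
      hx hsp (by positivity)
    have hgeo : Real.exp (-(2*Real.pi*δ)*((n:ℝ)+1)) ≤ r^n := by
      have e1 : Real.exp (-(2*Real.pi*δ)*((n:ℝ)+1)) = r^(n+1) := by
        rw [hrdef, ← Real.exp_nat_mul]; congr 1; push_cast; ring
      rw [e1, pow_succ]
      exact mul_le_of_le_one_right (pow_nonneg hr0.le n) hr1.le
    have h2Ck : (0:ℝ) ≤ 2 * Ck k := by linarith
    calc |b k (n+1)| * Real.exp (-2*Real.pi*((n:ℝ)+1)*y)
        ≤ (2 * Ck k * ((n:ℝ)+1) ^ ((k:ℝ)/2)) * Real.exp (-2*Real.pi*((n:ℝ)+1)*y) :=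
          mul_le_mul_of_nonneg_right hb' (Real.exp_pos _).le
      _ = 2 * Ck k * ((((n:ℝ)+1) ^ ((k:ℝ)/2)) * Real.exp (-(2*Real.pi*0.729*((n:ℝ)+1))))
            * Real.exp (-(2*Real.pi*δ)*((n:ℝ)+1)) := by rw [hdec]; ring
      _ ≤ (2 * Ck k * M) * r^n := by
          apply mul_le_mul (mul_le_mul_of_nonneg_left (hMdef ▸ hkey) h2Ck) hgeo
            (Real.exp_pos _).le (mul_nonneg h2Ck hM0)
  have hsummaj : Summable (fun n : ℕ => (2 * Ck k * M) * r^n) :=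
    (summable_geometric_of_lt_one hr0.le hr1).mul_left _
  have hsumnorm : Summable (fun n : ℕ =>
      ‖b k (n+1) * Real.exp (-2*Real.pi*((n:ℝ)+1)*y)‖) :=
    Summable.of_nonneg_of_le (fun n => norm_nonneg _) hterm hsummaj
  -- the main estimate: Ck k * M ≤ E * (k^2 * t^k)
  have hP : (1.0242382 * (k:ℝ) / 12) ^ ((k:ℝ)/2) = (1.0242382 * (k:ℝ) / 12) ^ m := by
    rw [hs, Real.rpow_natCast]
  have hMm : M = ((m:ℝ) / (2*Real.pi*0.729*Real.exp 1)) ^ m := by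
    rw [hMdef, hs, Real.rpow_natCast]
  set W : ℝ := (1.0242382 * (k:ℝ) / 12) * ((m:ℝ) / (2*Real.pi*0.729*Real.exp 1)) with hWdef
  have hW0 : 0 ≤ W := by rw [hWdef]; positivity
  have hCkM : Ck k * M = ((2*Real.pi)^k / (Nat.factorial (k-1) : ℝ)) * E *
      Real.sqrt (((k:ℝ)/12) * Real.log k) * W ^ m := by
    rw [Ck, hP, hMm, hWdef, mul_pow, ← hEdef, mul_assoc, mul_pow]
  have hB : Real.sqrt (((k:ℝ)/12) * Real.log k) ≤ (k:ℝ) := by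
    have hlog : Real.log k ≤ (k:ℝ) := by
      have := Real.log_le_sub_one_of_pos hk0
      linarith
    have hlog0 : (0:ℝ) ≤ Real.log k := Real.log_nonneg (by exact_mod_cast (by omega : 1 ≤ k))
    calc Real.sqrt (((k:ℝ)/12) * Real.log k) ≤ Real.sqrt ((k:ℝ)*(k:ℝ)) := by
          apply Real.sqrt_le_sqrt; nlinarith
      _ = (k:ℝ) := Real.sqrt_mul_self hk0.le
  have hA := fact_bound (k := k) (by omega)
  have hq : ((2*Real.pi*Real.exp 1/(k:ℝ))^2) * W = q := by
    rw [hWdef, hqdef, hkm]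
    field_simp
    ring
  have e1 : (2*Real.pi*Real.exp 1/(k:ℝ))^k = ((2*Real.pi*Real.exp 1/(k:ℝ))^2)^m := by
    rw [← pow_mul, ← hk2m]
  have e3 : q ^ m = t ^ k := by rw [hk2m, pow_mul, ht2]
  have hmain : Ck k * M ≤ E * ((k:ℝ)^2 * t^k) := by
    rw [hCkM]
    calc ((2*Real.pi)^k / (Nat.factorial (k-1) : ℝ)) * E *
          Real.sqrt (((k:ℝ)/12) * Real.log k) * W ^ m
        ≤ ((k:ℝ) * (2*Real.pi*Real.exp 1/(k:ℝ))^k) * E * (k:ℝ) * W ^ m := by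
          gcongr
      _ = E * ((k:ℝ)^2 * (((2*Real.pi*Real.exp 1/(k:ℝ))^2)^m * W^m)) := by
          rw [e1]; ring
      _ = E * ((k:ℝ)^2 * q^m) := by rw [← mul_pow, hq]
      _ = E * ((k:ℝ)^2 * t^k) := by rw [e3]
  -- put it together
  calc ‖∑' n : ℕ, b k (n + 1) * Real.exp (-2 * Real.pi * ((n : ℝ) + 1) * y)‖
      ≤ ∑' n : ℕ, ‖b k (n + 1) * Real.exp (-2 * Real.pi * ((n : ℝ) + 1) * y)‖ :=
        norm_tsum_le_tsum_norm hsumnorm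
    _ ≤ ∑' n : ℕ, (2 * Ck k * M) * r^n := Summable.tsum_le_tsum hterm hsumnorm hsummaj
    _ = (2 * Ck k * M) * (1-r)⁻¹ := by
        rw [tsum_mul_left, tsum_geometric_of_lt_one hr0.le hr1]
    _ = (2 * (1-r)⁻¹) * (Ck k * M) := by ring
    _ ≤ (2 * (1-r)⁻¹) * (E * ((k:ℝ)^2 * t^k)) := by
        apply mul_le_mul_of_nonneg_left hmain
        positivity
    _ = D * ((k:ℝ)^2 * t^k) := by rw [hDdef]; ring
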